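/- arXiv:math/0007117 — 2 statements merged into one kernel-verified Lean document; each statement's English description precedes it below -/
import Mathlib

section
/- Let F = l^∞(u_k) with weights u_k = 1/(k+1) for k ≥ 0 and u_k = 1 for k < 0, so that ‖a‖_E = sup_{k≥0} K(2^k, a; l^1, l^2)/(k+1) for the K-method space E = (l^1, l^2)^K_F. Then E coincides with the space l^1(log) of sequences a with ‖a‖_{l^1(log)} = sup_{k≥1} (log_2(2k))^{-1} Σ_{i=1}^k a_i* < ∞, and the two norms are equivalent: ‖a‖_E ≤ 14 ‖a‖_{l^1(log)} and ‖a‖_{l^1(log)} ≤ 2B ‖a‖_E, where B is the Holmstedt constant. -/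
open MeasureTheory
open scoped ENNReal

/-- The nonincreasing rearrangement of the sequence `(|a_k|)` (0-indexed). -/
noncomputable def decRearrSeq (a : ℕ → ℝ) (k : ℕ) : ℝ :=
  sInf {τ : ℝ | 0 ≤ τ ∧ Measure.count {i : ℕ | τ < |a i|} ≤ (k : ℝ≥0∞)}

/-- The Peetre K-functional for the couple `(ℓ¹, ℓ²)`. -/
noncomputable def Kl (t : ℝ) (a : ℕ → ℝ) : ℝ≥0∞ :=
  ⨅ (b : ℕ → ℝ) (c : ℕ → ℝ) (_ : a = b + c),
    (∑' k, ENNReal.ofReal |b k|) +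
      ENNReal.ofReal t * (∑' k, ENNReal.ofReal ((c k) ^ 2)) ^ (1/2 : ℝ)

/-- The Holmstedt expression for the couple `(ℓ¹, ℓ²)`. -/
noncomputable def holmstedt (t : ℝ) (a : ℕ → ℝ) : ℝ≥0∞ :=
  (∑ k ∈ Finset.range ⌊t ^ 2⌋₊, ENNReal.ofReal (decRearrSeq a k)) +
    ENNReal.ofReal t *
      (∑' k : ℕ, ENNReal.ofReal ((decRearrSeq a (⌊t ^ 2⌋₊ + k)) ^ 2)) ^ (1/2 : ℝ)

/-- The norm of the K-method space `E = (ℓ¹,ℓ²)^K_F`, `F = ℓ^∞(u_k)` with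
`u_k = 1/(k+1)` for `k ≥ 0` (and `u_k = 1` for `k < 0`, which contributes nothing):
`‖a‖_E = sup_{k ≥ 0} K(2^k, a; ℓ¹, ℓ²)/(k+1)`. -/
noncomputable def normE (a : ℕ → ℝ) : ℝ≥0∞ :=
  ⨆ k : ℕ, Kl ((2 : ℝ) ^ k) a / ((k : ℝ≥0∞) + 1)

/-- The norm of the space `ℓ¹(log)`:
`‖a‖ = sup_{k ≥ 1} (log₂(2k))⁻¹ ∑_{i=1}^k a_i*`. -/
noncomputable def norml1log (a : ℕ → ℝ) : ℝ≥0∞ :=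
  ⨆ k : ℕ, ENNReal.ofReal
    ((Real.logb 2 (2 * ((k : ℝ) + 1)))⁻¹ * ∑ i ∈ Finset.range (k + 1), decRearrSeq a i)

namespace KmethodAux

lemma rearr_nonneg (a : ℕ → ℝ) (k : ℕ) : 0 ≤ decRearrSeq a k :=
  Real.sInf_nonneg fun _ hx => hx.1

lemma nonempty_zero (a : ℕ → ℝ) (j : ℕ)
    (h : {τ : ℝ | 0 ≤ τ ∧ Measure.count {i : ℕ | τ < |a i|} ≤ (j : ℝ≥0∞)}.Nonempty) :
    {τ : ℝ | 0 ≤ τ ∧ Measure.count {i : ℕ | τ < |a i|} ≤ ((0 : ℕ) : ℝ≥0∞)}.Nonempty := by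
  obtain ⟨τ, hτ0, hτc⟩ := h
  have hfin : {i : ℕ | τ < |a i|}.Finite := by
    by_contra hinf
    have hinf' : {i : ℕ | τ < |a i|}.Infinite := hinf
    rw [Measure.count_apply_infinite hinf'] at hτc
    exact (ENNReal.natCast_ne_top j) (top_le_iff.mp hτc)
  obtain ⟨b, hb⟩ := (hfin.image fun i => |a i|).bddAbove
  refine ⟨max τ b, le_trans hτ0 (le_max_left _ _), ?_⟩
  have hempty : {i : ℕ | max τ b < |a i|} = ∅ := by
    apply Set.eq_empty_iff_forall_notMem.mpr
    intro i hi
    have h1 : τ < |a i| := lt_of_le_of_lt (le_max_left _ _) hi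
    have h2 : |a i| ≤ b := hb (Set.mem_image_of_mem _ h1)
    exact absurd (lt_of_le_of_lt (le_max_right τ b) hi) (not_lt.mpr h2)
  rw [hempty]
  simp

lemma rearr_antitone (a : ℕ → ℝ) : Antitone (decRearrSeq a) := by
  apply antitone_nat_of_succ_le
  intro k
  show decRearrSeq a (k + 1) ≤ decRearrSeq a k
  unfold decRearrSeq
  by_cases hk : {τ : ℝ | 0 ≤ τ ∧ Measure.count {i : ℕ | τ < |a i|} ≤ (k : ℝ≥0∞)}.Nonempty
  · apply csInf_le_csInf ⟨0, fun x hx => hx.1⟩ hk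
    intro τ hτ
    refine ⟨hτ.1, hτ.2.trans ?_⟩
    exact_mod_cast Nat.cast_le.mpr (Nat.le_succ k)
  · have h1 : ¬ {τ : ℝ | 0 ≤ τ ∧
        Measure.count {i : ℕ | τ < |a i|} ≤ ((k + 1 : ℕ) : ℝ≥0∞)}.Nonempty := by
      intro h
      apply hk
      obtain ⟨τ, h0, hc⟩ := nonempty_zero a (k + 1) h
      refine ⟨τ, h0, hc.trans ?_⟩
      exact_mod_cast Nat.cast_le.mpr (Nat.zero_le k)
    rw [Set.not_nonempty_iff_eq_empty] at hk h1
    rw [hk, h1]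

lemma logb_ge_one (k : ℕ) : 1 ≤ Real.logb 2 (2 * ((k : ℝ) + 1)) := by
  have h := Real.logb_le_logb_of_le one_lt_two (show (0 : ℝ) < 2 by norm_num)
    (show (2 : ℝ) ≤ 2 * ((k : ℝ) + 1) by nlinarith [Nat.cast_nonneg (α := ℝ) k])
  rwa [Real.logb_self_eq_one one_lt_two] at h

lemma sum_rearr_le (a : ℕ → ℝ) (hM : norml1log a ≠ ⊤) (k : ℕ) :
    ∑ i ∈ Finset.range (k + 1), decRearrSeq a i
      ≤ Real.logb 2 (2 * ((k : ℝ) + 1)) * (norml1log a).toReal := by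
  set c := Real.logb 2 (2 * ((k : ℝ) + 1)) with hc
  have hc1 : 1 ≤ c := logb_ge_one k
  have h1 : ENNReal.ofReal (c⁻¹ * ∑ i ∈ Finset.range (k + 1), decRearrSeq a i)
      ≤ norml1log a :=
    le_iSup (fun k : ℕ => ENNReal.ofReal
      ((Real.logb 2 (2 * ((k : ℝ) + 1)))⁻¹ * ∑ i ∈ Finset.range (k + 1), decRearrSeq a i)) k
  rw [ENNReal.ofReal_le_iff_le_toReal hM] at h1
  have hcpos : 0 < c := by linarith
  calc ∑ i ∈ Finset.range (k + 1), decRearrSeq a i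
      = c * (c⁻¹ * ∑ i ∈ Finset.range (k + 1), decRearrSeq a i) := by
        field_simp
    _ ≤ c * (norml1log a).toReal := mul_le_mul_of_nonneg_left h1 (le_of_lt hcpos)

lemma block_le (a : ℕ → ℝ) (hM : norml1log a ≠ ⊤) (m : ℕ) :
    (4 : ℝ) ^ m * decRearrSeq a (4 ^ m) ≤ (2 * (m : ℝ) + 2) * (norml1log a).toReal := by
  have hsum := sum_rearr_le a hM (4 ^ m)
  have hlow : ((4 ^ m + 1 : ℕ) : ℝ) * decRearrSeq a (4 ^ m)
      ≤ ∑ i ∈ Finset.range (4 ^ m + 1), decRearrSeq a i := by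
    have h := Finset.card_nsmul_le_sum (Finset.range (4 ^ m + 1)) (decRearrSeq a)
      (decRearrSeq a (4 ^ m))
      (fun i hi => rearr_antitone a (Nat.lt_succ_iff.mp (Finset.mem_range.mp hi)))
    simpa [nsmul_eq_mul] using h
  have hcb : Real.logb 2 (2 * (((4 ^ m : ℕ) : ℝ) + 1)) ≤ 2 * (m : ℝ) + 2 := by
    have h4 : (1 : ℝ) ≤ (4 : ℝ) ^ m := one_le_pow₀ (by norm_num)
    have h2 : (2 : ℝ) * (((4 ^ m : ℕ) : ℝ) + 1) ≤ 2 ^ (2 * m + 2) := by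
      have : (2 : ℝ) ^ (2 * m + 2) = 4 * 4 ^ m := by
        rw [show (4 : ℝ) = 2 ^ 2 by norm_num, ← pow_mul]
        ring
      rw [this]
      push_cast
      nlinarith
    calc Real.logb 2 (2 * (((4 ^ m : ℕ) : ℝ) + 1))
        ≤ Real.logb 2 ((2 : ℝ) ^ (2 * m + 2)) := by
          apply Real.logb_le_logb_of_le one_lt_two (by positivity) h2
      _ = 2 * (m : ℝ) + 2 := by
          rw [Real.logb_pow, Real.logb_self_eq_one one_lt_two]
          push_cast
          ring
  have hM0 : (0 : ℝ) ≤ (norml1log a).toReal := ENNReal.toReal_nonneg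
  have hx0 := rearr_nonneg a (4 ^ m)
  have hchain : ((4 ^ m + 1 : ℕ) : ℝ) * decRearrSeq a (4 ^ m)
      ≤ (2 * (m : ℝ) + 2) * (norml1log a).toReal := by
    refine (hlow.trans hsum).trans ?_
    exact mul_le_mul_of_nonneg_right hcb hM0
  have : (4 : ℝ) ^ m ≤ ((4 ^ m + 1 : ℕ) : ℝ) := by push_cast; linarith
  nlinarith

lemma sq_le_three_two_pow : ∀ m : ℕ, (m + 1) ^ 2 ≤ 3 * 2 ^ m
  | 0 => by norm_num
  | 1 => by norm_num
  | 2 => by norm_num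
  | (m + 3) => by
      have ih := sq_le_three_two_pow (m + 2)
      have h1 : (m + 3 + 1) ^ 2 ≤ 2 * (m + 2 + 1) ^ 2 := by
        have hh : (m + 3 + 1) ^ 2 + (m * m + 4 * m + 2) = 2 * (m + 2 + 1) ^ 2 := by ring
        linarith [hh, Nat.zero_le (m * m)]
      calc (m + 3 + 1) ^ 2 ≤ 2 * (m + 2 + 1) ^ 2 := h1
        _ ≤ 2 * (3 * 2 ^ (m + 2)) := Nat.mul_le_mul le_rfl ih
        _ = 3 * 2 ^ (m + 3) := by ring

lemma tail_term_le (a : ℕ → ℝ) (hM : norml1log a ≠ ⊤) (n m : ℕ) :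
    (3 * 4 ^ (n + m) : ℝ) * decRearrSeq a (4 ^ (n + m)) ^ 2
      ≤ 36 * ((n : ℝ) + 1) ^ 2 * (norml1log a).toReal ^ 2 / 4 ^ n * (1 / 2) ^ m := by
  set M' := (norml1log a).toReal with hM'
  set x := decRearrSeq a (4 ^ (n + m)) with hx
  have hb := block_le a hM (n + m)
  have hx0 : 0 ≤ x := rearr_nonneg a _
  have hM0 : 0 ≤ M' := ENNReal.toReal_nonneg
  have h3 : ((m : ℝ) + 1) ^ 2 ≤ 3 * 2 ^ m := by exact_mod_cast sq_le_three_two_pow m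
  have h4 : ((4 : ℝ) ^ (n + m) * x) ^ 2 ≤ ((2 * ((n : ℝ) + (m : ℝ)) + 2) * M') ^ 2 := by
    apply pow_le_pow_left₀ (by positivity)
    · push_cast at hb ⊢; linarith
  have hrw : (36 : ℝ) * ((n : ℝ) + 1) ^ 2 * M' ^ 2 / 4 ^ n * (1 / 2) ^ m
      = 36 * ((n : ℝ) + 1) ^ 2 * M' ^ 2 * 2 ^ m / 4 ^ (n + m) := by
    rw [pow_add]
    have h2 : (4 : ℝ) ^ m = 2 ^ m * 2 ^ m := by
      rw [show (4 : ℝ) = 2 * 2 by norm_num, mul_pow]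
    rw [h2, one_div_pow]
    have hp : (0 : ℝ) < 2 ^ m := by positivity
    field_simp
  rw [hrw, le_div_iff₀ (by positivity)]
  have e3 : (2 * ((n : ℝ) + (m : ℝ)) + 2) ^ 2 ≤ 4 * ((n : ℝ) + 1) ^ 2 * ((m : ℝ) + 1) ^ 2 := by
    have hn0 : (0 : ℝ) ≤ (n : ℝ) := Nat.cast_nonneg n
    have hm0 : (0 : ℝ) ≤ (m : ℝ) := Nat.cast_nonneg m
    nlinarith [mul_nonneg hn0 hm0, sq_nonneg ((n : ℝ) * (m : ℝ))]
  calc (3 * 4 ^ (n + m) : ℝ) * x ^ 2 * 4 ^ (n + m)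
      = 3 * ((4 : ℝ) ^ (n + m) * x) ^ 2 := by ring
    _ ≤ 3 * ((2 * ((n : ℝ) + (m : ℝ)) + 2) * M') ^ 2 := by linarith
    _ = 3 * (2 * ((n : ℝ) + (m : ℝ)) + 2) ^ 2 * M' ^ 2 := by ring
    _ ≤ 3 * (4 * ((n : ℝ) + 1) ^ 2 * ((m : ℝ) + 1) ^ 2) * M' ^ 2 := by nlinarith [sq_nonneg M']
    _ ≤ 3 * (4 * ((n : ℝ) + 1) ^ 2 * (3 * 2 ^ m)) * M' ^ 2 := by
        have hn1 : (0 : ℝ) ≤ ((n : ℝ) + 1) ^ 2 := sq_nonneg _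
        nlinarith [sq_nonneg M', mul_nonneg hn1 (sq_nonneg M')]
    _ = 36 * ((n : ℝ) + 1) ^ 2 * M' ^ 2 * 2 ^ m := by ring

lemma tail_le (a : ℕ → ℝ) (hM : norml1log a ≠ ⊤) (n : ℕ) :
    (∑' k : ℕ, ENNReal.ofReal (decRearrSeq a (4 ^ n + k) ^ 2))
      ≤ ENNReal.ofReal (72 * ((n : ℝ) + 1) ^ 2 * (norml1log a).toReal ^ 2 / 4 ^ n) := by
  set M' := (norml1log a).toReal with hM'
  have hpos : ∀ k : ℕ, 4 ^ n + k ≠ 0 := fun k => by positivity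
  have hlog_ge : ∀ k : ℕ, n ≤ Nat.log 4 (4 ^ n + k) := fun k =>
    (Nat.le_log_iff_pow_le (by norm_num) (hpos k)).mpr (Nat.le_add_right _ _)
  have key : ∀ k : ℕ, 4 ^ n + k - 4 ^ (Nat.log 4 (4 ^ n + k))
      < 3 * 4 ^ (n + (Nat.log 4 (4 ^ n + k) - n)) := by
    intro k
    have h1 := Nat.pow_log_le_self 4 (hpos k)
    have h2 := Nat.lt_pow_succ_log_self (b := 4) (by norm_num) (4 ^ n + k)
    rw [Nat.add_sub_cancel' (hlog_ge k)]
    have h4 : 4 ^ n + k < 4 * 4 ^ (Nat.log 4 (4 ^ n + k)) := by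
      calc 4 ^ n + k < 4 ^ (Nat.log 4 (4 ^ n + k)).succ := h2
        _ = 4 * 4 ^ (Nat.log 4 (4 ^ n + k)) := by rw [pow_succ]; ring
    omega
  let e : ℕ → Σ m : ℕ, Fin (3 * 4 ^ (n + m)) := fun k =>
    ⟨Nat.log 4 (4 ^ n + k) - n, ⟨4 ^ n + k - 4 ^ (Nat.log 4 (4 ^ n + k)), key k⟩⟩
  have he : Function.Injective e := by
    have hli : Function.LeftInverse
        (fun p : Σ m : ℕ, Fin (3 * 4 ^ (n + m)) => 4 ^ (n + p.1) + p.2.val - 4 ^ n) e := by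
      intro k
      simp only [e]
      rw [Nat.add_sub_cancel' (hlog_ge k)]
      have h1 := Nat.pow_log_le_self 4 (hpos k)
      omega
    exact hli.injective
  let f : (Σ m : ℕ, Fin (3 * 4 ^ (n + m))) → ℝ≥0∞ := fun p =>
    ENNReal.ofReal (decRearrSeq a (4 ^ (n + p.1)) ^ 2)
  have step1 : (∑' k : ℕ, ENNReal.ofReal (decRearrSeq a (4 ^ n + k) ^ 2)) ≤ ∑' p, f p := by
    refine le_trans (ENNReal.tsum_le_tsum (fun k => ?_))
      (ENNReal.tsum_comp_le_tsum_of_injective he f)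
    show ENNReal.ofReal (decRearrSeq a (4 ^ n + k) ^ 2)
      ≤ ENNReal.ofReal (decRearrSeq a (4 ^ (n + (Nat.log 4 (4 ^ n + k) - n))) ^ 2)
    apply ENNReal.ofReal_le_ofReal
    have hle : 4 ^ (n + (Nat.log 4 (4 ^ n + k) - n)) ≤ 4 ^ n + k := by
      rw [Nat.add_sub_cancel' (hlog_ge k)]
      exact Nat.pow_log_le_self 4 (hpos k)
    have hmono := rearr_antitone a hle
    exact pow_le_pow_left₀ (rearr_nonneg a _) hmono 2
  have step2 : (∑' p, f p)
      = ∑' m : ℕ, ((3 * 4 ^ (n + m) : ℕ) : ℝ≥0∞)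
          * ENNReal.ofReal (decRearrSeq a (4 ^ (n + m)) ^ 2) := by
    rw [ENNReal.tsum_sigma' f]
    apply tsum_congr
    intro m
    rw [tsum_fintype]
    simp [f, Finset.card_univ, nsmul_eq_mul]
  have step3 : ∀ m : ℕ, ((3 * 4 ^ (n + m) : ℕ) : ℝ≥0∞)
      * ENNReal.ofReal (decRearrSeq a (4 ^ (n + m)) ^ 2)
      ≤ ENNReal.ofReal (36 * ((n : ℝ) + 1) ^ 2 * M' ^ 2 / 4 ^ n)
          * ENNReal.ofReal ((1 / 2 : ℝ) ^ m) := by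
    intro m
    rw [← ENNReal.ofReal_natCast, ← ENNReal.ofReal_mul (by positivity),
      ← ENNReal.ofReal_mul (by positivity)]
    apply ENNReal.ofReal_le_ofReal
    have := tail_term_le a hM n m
    push_cast
    push_cast at this
    linarith [this]
  have hgeom : (∑' m : ℕ, ENNReal.ofReal ((1 / 2 : ℝ) ^ m)) = 2 := by
    have hco : ∀ m : ℕ, ENNReal.ofReal ((1 / 2 : ℝ) ^ m) = (2 : ℝ≥0∞)⁻¹ ^ m := by
      intro m
      rw [ENNReal.ofReal_pow (by norm_num)]
      congr 1
      rw [show (1 / 2 : ℝ) = 2⁻¹ by norm_num, ENNReal.ofReal_inv_of_pos (by norm_num)]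
      norm_num
    rw [tsum_congr hco, ENNReal.tsum_geometric, ENNReal.one_sub_inv_two, inv_inv]
  calc (∑' k : ℕ, ENNReal.ofReal (decRearrSeq a (4 ^ n + k) ^ 2))
      ≤ ∑' p, f p := step1
    _ = ∑' m : ℕ, ((3 * 4 ^ (n + m) : ℕ) : ℝ≥0∞)
          * ENNReal.ofReal (decRearrSeq a (4 ^ (n + m)) ^ 2) := step2
    _ ≤ ∑' m : ℕ, ENNReal.ofReal (36 * ((n : ℝ) + 1) ^ 2 * M' ^ 2 / 4 ^ n)
          * ENNReal.ofReal ((1 / 2 : ℝ) ^ m) := ENNReal.tsum_le_tsum step3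
    _ = ENNReal.ofReal (36 * ((n : ℝ) + 1) ^ 2 * M' ^ 2 / 4 ^ n)
          * ∑' m : ℕ, ENNReal.ofReal ((1 / 2 : ℝ) ^ m) := ENNReal.tsum_mul_left
    _ = ENNReal.ofReal (36 * ((n : ℝ) + 1) ^ 2 * M' ^ 2 / 4 ^ n) * 2 := by rw [hgeom]
    _ = ENNReal.ofReal (72 * ((n : ℝ) + 1) ^ 2 * M' ^ 2 / 4 ^ n) := by
        rw [show (2 : ℝ≥0∞) = ENNReal.ofReal (2 : ℝ) by norm_num,
          ← ENNReal.ofReal_mul (by positivity)]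
        congr 1
        ring

lemma floor_two_pow_sq (n : ℕ) : ⌊((2 : ℝ) ^ n) ^ 2⌋₊ = 4 ^ n := by
  have h : ((2 : ℝ) ^ n) ^ 2 = ((4 ^ n : ℕ) : ℝ) := by
    push_cast
    rw [← pow_mul, mul_comm n 2, pow_mul]
    norm_num
  rw [h]
  exact Nat.floor_natCast _

end KmethodAux

open KmethodAux in
/-- `(ℓ¹, ℓ²)^K_F = ℓ¹(log)` with explicit constants, where `B` is the Holmstedt
constant: `‖a‖_E ≤ 14 ‖a‖_{ℓ¹(log)}` and `‖a‖_{ℓ¹(log)} ≤ 2B ‖a‖_E`. -/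
theorem Kmethod_eq_l1log (B : ℝ) (hB1 : 1 ≤ B)
    (hB : ∀ (a : ℕ → ℝ) (t : ℝ), 0 < t →
      Kl t a ≤ holmstedt t a ∧ holmstedt t a ≤ ENNReal.ofReal B * Kl t a) :
    ∀ a : ℕ → ℝ,
      normE a ≤ 14 * norml1log a ∧ norml1log a ≤ ENNReal.ofReal (2 * B) * normE a := by
  intro a
  constructor
  · -- `‖a‖_E ≤ 14 ‖a‖_{ℓ¹(log)}`
    by_cases hM : norml1log a = ⊤
    · rw [hM, ENNReal.mul_top (by norm_num)]
      exact le_top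
    apply iSup_le
    intro n
    set M' := (norml1log a).toReal with hM'
    have hM0 : 0 ≤ M' := ENNReal.toReal_nonneg
    have hKH := (hB a ((2 : ℝ) ^ n) (by positivity)).1
    have hs1 : (∑ k ∈ Finset.range (4 ^ n), ENNReal.ofReal (decRearrSeq a k))
        ≤ ENNReal.ofReal ((2 * (n : ℝ) + 1) * M') := by
      rw [← ENNReal.ofReal_sum_of_nonneg (fun i _ => rearr_nonneg a i)]
      apply ENNReal.ofReal_le_ofReal
      have h := sum_rearr_le a hM (4 ^ n - 1)
      rw [show 4 ^ n - 1 + 1 = 4 ^ n from Nat.succ_pred_eq_of_pos (pow_pos (by norm_num : (0 : ℕ) < 4) n)] at h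
      refine h.trans ?_
      apply mul_le_mul_of_nonneg_right _ hM0
      have hcast : ((4 ^ n - 1 : ℕ) : ℝ) + 1 = (4 : ℝ) ^ n := by
        have h1 : 1 ≤ 4 ^ n := Nat.one_le_pow n 4 (by norm_num)
        push_cast [Nat.cast_sub h1]
        ring
      rw [hcast]
      have h2 : (2 : ℝ) * (4 : ℝ) ^ n = 2 ^ (2 * n + 1) := by
        rw [show (4 : ℝ) = 2 ^ 2 by norm_num, ← pow_mul]
        ring
      rw [h2, Real.logb_pow, Real.logb_self_eq_one one_lt_two]
      push_cast
      ring_nf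
      linarith
    have hs2 : ENNReal.ofReal ((2 : ℝ) ^ n)
        * (∑' k : ℕ, ENNReal.ofReal (decRearrSeq a (4 ^ n + k) ^ 2)) ^ (1/2 : ℝ)
        ≤ ENNReal.ofReal (9 * ((n : ℝ) + 1) * M') := by
      have hT := tail_le a hM n
      set Y := ENNReal.ofReal (9 * ((n : ℝ) + 1) * M' / 2 ^ n) with hY
      have hY2 : ENNReal.ofReal (72 * ((n : ℝ) + 1) ^ 2 * M' ^ 2 / 4 ^ n) ≤ Y ^ 2 := by
        rw [hY, ← ENNReal.ofReal_pow (by positivity)]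
        apply ENNReal.ofReal_le_ofReal
        have h4n : ((2 : ℝ) ^ n) ^ 2 = (4 : ℝ) ^ n := by
          rw [← pow_mul, mul_comm n 2, pow_mul]
          norm_num
        rw [div_pow, h4n]
        apply div_le_div_of_nonneg_right ?_ (by positivity)
        · nlinarith [sq_nonneg ((n : ℝ) + 1), sq_nonneg M',
            mul_nonneg (sq_nonneg ((n : ℝ) + 1)) (sq_nonneg M')]
      have h12 : (∑' k : ℕ, ENNReal.ofReal (decRearrSeq a (4 ^ n + k) ^ 2)) ^ (1/2 : ℝ) ≤ Y := by
        calc (∑' k : ℕ, ENNReal.ofReal (decRearrSeq a (4 ^ n + k) ^ 2)) ^ (1/2 : ℝ)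
            ≤ (Y ^ 2) ^ (1/2 : ℝ) := ENNReal.rpow_le_rpow (hT.trans hY2) (by norm_num)
          _ = Y := by
              rw [← ENNReal.rpow_natCast Y 2, ← ENNReal.rpow_mul]
              norm_num
      calc ENNReal.ofReal ((2 : ℝ) ^ n)
          * (∑' k : ℕ, ENNReal.ofReal (decRearrSeq a (4 ^ n + k) ^ 2)) ^ (1/2 : ℝ)
          ≤ ENNReal.ofReal ((2 : ℝ) ^ n) * Y := mul_le_mul_right h12 _
        _ = ENNReal.ofReal (9 * ((n : ℝ) + 1) * M') := by
            rw [hY, ← ENNReal.ofReal_mul (by positivity)]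
            congr 1
            field_simp
    have hH : holmstedt ((2 : ℝ) ^ n) a ≤ ENNReal.ofReal (14 * ((n : ℝ) + 1) * M') := by
      unfold holmstedt
      rw [floor_two_pow_sq n]
      calc (∑ k ∈ Finset.range (4 ^ n), ENNReal.ofReal (decRearrSeq a k))
            + ENNReal.ofReal ((2 : ℝ) ^ n)
              * (∑' k : ℕ, ENNReal.ofReal (decRearrSeq a (4 ^ n + k) ^ 2)) ^ (1/2 : ℝ)
          ≤ ENNReal.ofReal ((2 * (n : ℝ) + 1) * M')
              + ENNReal.ofReal (9 * ((n : ℝ) + 1) * M') := add_le_add hs1 hs2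
        _ = ENNReal.ofReal ((2 * (n : ℝ) + 1) * M' + 9 * ((n : ℝ) + 1) * M') :=
            (ENNReal.ofReal_add (by positivity) (by positivity)).symm
        _ ≤ ENNReal.ofReal (14 * ((n : ℝ) + 1) * M') := by
            apply ENNReal.ofReal_le_ofReal
            nlinarith [Nat.cast_nonneg (α := ℝ) n]
    rw [ENNReal.div_le_iff_le_mul (Or.inl (by exact_mod_cast Nat.succ_ne_zero n))
      (Or.inl (by simp))]
    calc Kl ((2 : ℝ) ^ n) a ≤ holmstedt ((2 : ℝ) ^ n) a := hKH
      _ ≤ ENNReal.ofReal (14 * ((n : ℝ) + 1) * M') := hH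
      _ = 14 * norml1log a * ((n : ℝ≥0∞) + 1) := by
          rw [ENNReal.ofReal_mul (show (0 : ℝ) ≤ 14 * ((n : ℝ) + 1) by positivity),
            ENNReal.ofReal_toReal hM]
          rw [show (14 * ((n : ℝ) + 1)) = ((14 * (n + 1) : ℕ) : ℝ) by push_cast; ring,
            ENNReal.ofReal_natCast]
          push_cast
          ring
  · -- `‖a‖_{ℓ¹(log)} ≤ 2B ‖a‖_E`
    apply iSup_le
    intro k
    set n := Nat.clog 4 (k + 1) with hn
    have hk4 : k + 1 ≤ 4 ^ n := Nat.le_pow_clog (by norm_num) _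
    set c := Real.logb 2 (2 * ((k : ℝ) + 1)) with hc
    have hc1 : 1 ≤ c := logb_ge_one k
    have hcn : (n : ℝ) + 1 ≤ 2 * c := by
      rcases Nat.eq_zero_or_pos n with h0 | hpos
      · rw [h0]
        push_cast
        linarith
      · have hk1 : 1 < k + 1 := by
          rcases Nat.eq_zero_or_pos k with hk0 | hkp
          · exfalso
            rw [hk0, Nat.clog_one_right] at hn
            omega
          · omega
        have hlt' : 4 ^ (n - 1) < k + 1 := by
          have h := Nat.pow_pred_clog_lt_self (b := 4) (by norm_num) hk1
          simpa [hn, Nat.pred_eq_sub_one] using h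
        have hr : ((4 : ℝ)) ^ (n - 1) ≤ (k : ℝ) + 1 := by
          exact_mod_cast hlt'.le
        have hmono : Real.logb 2 (2 * (4 : ℝ) ^ (n - 1)) ≤ c := by
          rw [hc]
          apply Real.logb_le_logb_of_le one_lt_two (by positivity)
          linarith
        have heq : Real.logb 2 (2 * (4 : ℝ) ^ (n - 1)) = 2 * ((n : ℝ) - 1) + 1 := by
          have h2 : (2 : ℝ) * (4 : ℝ) ^ (n - 1) = 2 ^ (2 * (n - 1) + 1) := by
            rw [show (4 : ℝ) = 2 ^ 2 by norm_num, ← pow_mul]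
            ring
          rw [h2, Real.logb_pow, Real.logb_self_eq_one one_lt_two]
          have hcast : ((n - 1 : ℕ) : ℝ) = (n : ℝ) - 1 := by
            have h1 : 1 ≤ n := hpos
            push_cast [Nat.cast_sub h1]
            ring
          push_cast [hcast]
          ring
        have hn1 : (1 : ℝ) ≤ (n : ℝ) := by exact_mod_cast hpos
        rw [heq] at hmono
        linarith
    have hfl := floor_two_pow_sq n
    have h2 : (∑ i ∈ Finset.range (4 ^ n), ENNReal.ofReal (decRearrSeq a i))
        ≤ holmstedt ((2 : ℝ) ^ n) a := by
      unfold holmstedt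
      rw [hfl]
      exact le_add_right le_rfl
    have h3 := (hB a ((2 : ℝ) ^ n) (by positivity)).2
    have h4 : Kl ((2 : ℝ) ^ n) a ≤ ((n : ℝ≥0∞) + 1) * normE a := by
      have hle : Kl ((2 : ℝ) ^ n) a / ((n : ℝ≥0∞) + 1) ≤ normE a :=
        le_iSup (fun m : ℕ => Kl ((2 : ℝ) ^ m) a / ((m : ℝ≥0∞) + 1)) n
      calc Kl ((2 : ℝ) ^ n) a
          = Kl ((2 : ℝ) ^ n) a / ((n : ℝ≥0∞) + 1) * ((n : ℝ≥0∞) + 1) := by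
            rw [ENNReal.div_mul_cancel (by exact_mod_cast Nat.succ_ne_zero n) (by simp)]
        _ ≤ normE a * ((n : ℝ≥0∞) + 1) := mul_le_mul_left hle _
        _ = ((n : ℝ≥0∞) + 1) * normE a := mul_comm _ _
    have h1 : ENNReal.ofReal (c⁻¹ * ∑ i ∈ Finset.range (k + 1), decRearrSeq a i)
        ≤ ENNReal.ofReal c⁻¹
            * (∑ i ∈ Finset.range (4 ^ n), ENNReal.ofReal (decRearrSeq a i)) := by
      rw [ENNReal.ofReal_mul (by positivity)]
      apply mul_le_mul_right
      rw [← ENNReal.ofReal_sum_of_nonneg (fun i _ => rearr_nonneg a i)]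
      apply ENNReal.ofReal_le_ofReal
      exact Finset.sum_le_sum_of_subset_of_nonneg (Finset.range_subset_range.mpr hk4)
        (fun i _ _ => rearr_nonneg a i)
    have hc2 : ENNReal.ofReal c⁻¹ * ((n : ℝ≥0∞) + 1) ≤ 2 := by
      have hrw : ((n : ℝ≥0∞) + 1) = ENNReal.ofReal ((n : ℝ) + 1) := by
        rw [show ((n : ℝ) + 1) = ((n + 1 : ℕ) : ℝ) by push_cast; ring, ENNReal.ofReal_natCast]
        push_cast
        ring
      rw [hrw, ← ENNReal.ofReal_mul (by positivity)]
      calc ENNReal.ofReal (c⁻¹ * ((n : ℝ) + 1)) ≤ ENNReal.ofReal 2 := by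
            apply ENNReal.ofReal_le_ofReal
            rw [inv_mul_le_iff₀ (by linarith)]
            linarith
        _ = 2 := by norm_num
    calc ENNReal.ofReal (c⁻¹ * ∑ i ∈ Finset.range (k + 1), decRearrSeq a i)
        ≤ ENNReal.ofReal c⁻¹
            * (∑ i ∈ Finset.range (4 ^ n), ENNReal.ofReal (decRearrSeq a i)) := h1
      _ ≤ ENNReal.ofReal c⁻¹ * (ENNReal.ofReal B * (((n : ℝ≥0∞) + 1) * normE a)) := by
          apply mul_le_mul_right
          exact h2.trans (h3.trans (mul_le_mul_right h4 _))
      _ = (ENNReal.ofReal c⁻¹ * ((n : ℝ≥0∞) + 1)) * (ENNReal.ofReal B * normE a) := by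
          ring
      _ ≤ 2 * (ENNReal.ofReal B * normE a) := mul_le_mul_left hc2 _
      _ = ENNReal.ofReal (2 * B) * normE a := by
          rw [ENNReal.ofReal_mul (show (0 : ℝ) ≤ 2 by norm_num), ENNReal.ofReal_ofNat]
          ring
end

section
/- Let a = (a_k) be a nonincreasing nonnegative sequence with sup_{k≥0} (k+1)^{-1} Σ_{i=1}^{2^{2k}} a_i ≤ 2R (i.e. ‖a‖_{l^1(log)} ≤ R). Then a_{2^{2k}} ≤ 2^{1−2k} R (k+1) for all k ≥ 0, and Σ_{i=2^{2k}+1}^∞ a_i² ≤ 144 R² (k+1)² 2^{−2k}. -/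
/-- Geometric-type series identity: `∑_{n<t} (n+1)²/4ⁿ = 80/27 - f(t)/4ᵗ` exactly. -/
lemma geo_sq_identity : ∀ t : ℕ,
    ∑ n ∈ Finset.range t, ((n : ℝ) + 1) ^ 2 * ((4 : ℝ)⁻¹) ^ n
      + ((4/3) * ((t : ℝ) + 1)^2 + (8/9) * ((t : ℝ) + 1) + 20/27) * ((4 : ℝ)⁻¹) ^ t
      = 80 / 27 := by
  intro t
  induction t with
  | zero => norm_num
  | succ t ih =>
    rw [Finset.sum_range_succ]
    push_cast
    rw [pow_succ]
    push_cast at ih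
    linear_combination ih

lemma geo_sq_bound (t : ℕ) :
    ∑ n ∈ Finset.range t, ((n : ℝ) + 1) ^ 2 * ((4 : ℝ)⁻¹) ^ n ≤ 3 := by
  have h := geo_sq_identity t
  have ht : (0:ℝ) ≤ (t:ℝ) := Nat.cast_nonneg t
  have h1 : (0:ℝ) ≤ ((4/3) * ((t : ℝ) + 1)^2 + (8/9) * ((t : ℝ) + 1) + 20/27) * ((4 : ℝ)⁻¹) ^ t := by
    positivity
  linarith

/-- If `a` is a nonincreasing nonnegative sequence (indexed from 1) with
`∑_{i=1}^{2^{2k}} a_i ≤ 2R(k+1)` for all `k ≥ 0`, then `a_{2^{2k}} ≤ 2^{1-2k} R (k+1)`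
and `∑_{i=2^{2k}+1}^∞ a_i² ≤ 144 R² (k+1)² 2^{-2k}`. -/
theorem tail_square_sum_bound (a : ℕ → ℝ) (R : ℝ) (hR : 0 < R)
    (hnonneg : ∀ i : ℕ, 0 ≤ a i)
    (hanti : ∀ i j : ℕ, 1 ≤ i → i ≤ j → a j ≤ a i)
    (hsum : ∀ k : ℕ, ∑ i ∈ Finset.Icc 1 (2 ^ (2 * k)), a i ≤ 2 * R * ((k : ℝ) + 1)) :
    ∀ k : ℕ,
      a (2 ^ (2 * k)) ≤ (2 : ℝ) ^ (1 - 2 * (k : ℤ)) * R * ((k : ℝ) + 1) ∧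
      (∑' j : ℕ, (a (2 ^ (2 * k) + 1 + j)) ^ 2) ≤
        144 * R ^ 2 * ((k : ℝ) + 1) ^ 2 * (2 : ℝ) ^ (-(2 * (k : ℤ))) := by
  have key : ∀ m : ℕ, (2:ℝ)^(2*m) * a (2^(2*m)) ≤ 2 * R * ((m:ℝ)+1) := by
    intro m
    have h1 : (2:ℝ)^(2*m) * a (2^(2*m)) = ∑ _i ∈ Finset.Icc 1 (2^(2*m)), a (2^(2*m)) := by
      rw [Finset.sum_const, Nat.card_Icc, nsmul_eq_mul]
      norm_num
    rw [h1]
    refine le_trans (Finset.sum_le_sum ?_) (hsum m)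
    intro i hi
    rw [Finset.mem_Icc] at hi
    exact hanti i _ hi.1 hi.2
  have hpow : ∀ m : ℕ, (0:ℝ) < (2:ℝ)^(2*m) := fun m => by positivity
  have keyA : ∀ m : ℕ, a (2^(2*m)) ≤ 2 * R * ((m:ℝ)+1) / (2:ℝ)^(2*m) := by
    intro m
    rw [le_div_iff₀ (hpow m)]
    calc a (2^(2*m)) * (2:ℝ)^(2*m) = (2:ℝ)^(2*m) * a (2^(2*m)) := by ring
    _ ≤ _ := key m
  have block : ∀ m : ℕ, ∑ i ∈ Finset.Ioc (2^(2*m)) (2^(2*(m+1))), (a i)^2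
      ≤ 12 * R^2 * ((m:ℝ)+1)^2 * ((2:ℝ)^(2*m))⁻¹ := by
    intro m
    have hone : (1:ℕ) ≤ 2^(2*m) := Nat.one_le_two_pow
    have hterm : ∀ i ∈ Finset.Ioc (2^(2*m)) (2^(2*(m+1))), (a i)^2 ≤ (a (2^(2*m)))^2 := by
      intro i hi
      rw [Finset.mem_Ioc] at hi
      exact pow_le_pow_left₀ (hnonneg i) (hanti (2^(2*m)) i hone (le_of_lt hi.1)) 2
    calc ∑ i ∈ Finset.Ioc (2^(2*m)) (2^(2*(m+1))), (a i)^2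
        ≤ ∑ _i ∈ Finset.Ioc (2^(2*m)) (2^(2*(m+1))), (a (2^(2*m)))^2 :=
          Finset.sum_le_sum hterm
      _ = (3 * (2:ℝ)^(2*m)) * (a (2^(2*m)))^2 := by
          rw [Finset.sum_const, Nat.card_Ioc, nsmul_eq_mul]
          congr 1
          have h2 : (2:ℕ)^(2*(m+1)) - 2^(2*m) = 3 * 2^(2*m) := by
            have : (2:ℕ)^(2*(m+1)) = 4 * 2^(2*m) := by
              rw [show 2*(m+1) = 2*m + 2 by ring, pow_add]; ring
            omega
          rw [h2]; push_cast; ring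
      _ ≤ (3 * (2:ℝ)^(2*m)) * (2 * R * ((m:ℝ)+1) / (2:ℝ)^(2*m))^2 := by
          apply mul_le_mul_of_nonneg_left _ (by positivity)
          exact pow_le_pow_left₀ (hnonneg _) (keyA m) 2
      _ = 12 * R^2 * ((m:ℝ)+1)^2 * ((2:ℝ)^(2*m))⁻¹ := by
          field_simp
          ring
  intro k
  have hk4 : (0:ℝ) < (2:ℝ)^(2*k) := hpow k
  constructor
  · -- part 1
    have hz : (2 : ℝ) ^ (1 - 2 * (k : ℤ)) = 2 / (2:ℝ)^(2*k) := by
      rw [zpow_sub₀ (by norm_num : (2:ℝ) ≠ 0), zpow_one,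
        show (2 * (k:ℤ)) = ((2*k : ℕ) : ℤ) by push_cast; ring, zpow_natCast]
    rw [hz]
    calc a (2^(2*k)) ≤ 2 * R * ((k:ℝ)+1) / (2:ℝ)^(2*k) := keyA k
      _ = 2 / (2:ℝ)^(2*k) * R * ((k:ℝ)+1) := by ring
  · -- part 2
    have hC' : ∀ t : ℕ, ∑ i ∈ Finset.Ioc (2^(2*k)) (2^(2*(k+t))), (a i)^2
        ≤ 12 * R^2 * ((k:ℝ)+1)^2 * ((2:ℝ)^(2*k))⁻¹
          * ∑ n ∈ Finset.range t, ((n : ℝ) + 1) ^ 2 * ((4 : ℝ)⁻¹) ^ n := by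
      intro t
      induction t with
      | zero => simp
      | succ t ih =>
        have hmono : (2:ℕ)^(2*k) ≤ 2^(2*(k+t)) :=
          Nat.pow_le_pow_right (by norm_num) (by omega)
        have hmono2 : (2:ℕ)^(2*(k+t)) ≤ 2^(2*(k+t+1)) :=
          Nat.pow_le_pow_right (by norm_num) (by omega)
        have hstep := Finset.sum_Ioc_consecutive (fun i => (a i)^2) hmono hmono2
        have hsplit : ((((k+t):ℕ):ℝ)+1)^2 ≤ ((k:ℝ)+1)^2 * ((t:ℝ)+1)^2 := by
          push_cast
          nlinarith [Nat.cast_nonneg (α := ℝ) k, Nat.cast_nonneg (α := ℝ) t,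
            mul_nonneg (Nat.cast_nonneg (α := ℝ) k) (Nat.cast_nonneg (α := ℝ) t)]
        have h4 : ((4:ℝ)⁻¹)^t = ((2:ℝ)^(2*t))⁻¹ := by
          rw [inv_pow, pow_mul]; norm_num
        have hpw : ((2:ℝ)^(2*(k+t)))⁻¹ = ((2:ℝ)^(2*k))⁻¹ * ((4:ℝ)⁻¹)^t := by
          rw [h4, ← mul_inv, ← pow_add]
          congr 2
          ring
        have hb2 : ∑ i ∈ Finset.Ioc (2^(2*(k+t))) (2^(2*(k+t+1))), (a i)^2
            ≤ 12 * R^2 * ((k:ℝ)+1)^2 * ((2:ℝ)^(2*k))⁻¹ * (((t:ℝ)+1)^2 * ((4:ℝ)⁻¹)^t) := by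
          refine le_trans (block (k+t)) ?_
          rw [hpw]
          calc 12 * R^2 * ((((k+t):ℕ):ℝ)+1)^2 * (((2:ℝ)^(2*k))⁻¹ * ((4:ℝ)⁻¹)^t)
              ≤ 12 * R^2 * (((k:ℝ)+1)^2 * ((t:ℝ)+1)^2) * (((2:ℝ)^(2*k))⁻¹ * ((4:ℝ)⁻¹)^t) := by
                apply mul_le_mul_of_nonneg_right _ (by positivity)
                apply mul_le_mul_of_nonneg_left hsplit (by positivity)
            _ = _ := by ring
        rw [Finset.sum_range_succ]
        calc ∑ i ∈ Finset.Ioc (2^(2*k)) (2^(2*(k+(t+1)))), (a i)^2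
            = ∑ i ∈ Finset.Ioc (2^(2*k)) (2^(2*(k+t))), (a i)^2
              + ∑ i ∈ Finset.Ioc (2^(2*(k+t))) (2^(2*(k+t+1))), (a i)^2 := hstep.symm
          _ ≤ 12 * R^2 * ((k:ℝ)+1)^2 * ((2:ℝ)^(2*k))⁻¹
                * ∑ n ∈ Finset.range t, ((n : ℝ) + 1) ^ 2 * ((4 : ℝ)⁻¹) ^ n
              + 12 * R^2 * ((k:ℝ)+1)^2 * ((2:ℝ)^(2*k))⁻¹ * (((t:ℝ)+1)^2 * ((4:ℝ)⁻¹)^t) :=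
            add_le_add ih hb2
          _ = _ := by ring
    have hC : ∀ t : ℕ, ∑ i ∈ Finset.Ioc (2^(2*k)) (2^(2*(k+t))), (a i)^2
        ≤ 36 * R^2 * ((k:ℝ)+1)^2 * ((2:ℝ)^(2*k))⁻¹ := by
      intro t
      refine le_trans (hC' t) ?_
      calc 12 * R^2 * ((k:ℝ)+1)^2 * ((2:ℝ)^(2*k))⁻¹
            * ∑ n ∈ Finset.range t, ((n : ℝ) + 1) ^ 2 * ((4 : ℝ)⁻¹) ^ n
          ≤ 12 * R^2 * ((k:ℝ)+1)^2 * ((2:ℝ)^(2*k))⁻¹ * 3 :=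
            mul_le_mul_of_nonneg_left (geo_sq_bound t) (by positivity)
        _ = 36 * R^2 * ((k:ℝ)+1)^2 * ((2:ℝ)^(2*k))⁻¹ := by ring
    have hpartial : ∀ N : ℕ, ∑ j ∈ Finset.range N, (a (2 ^ (2 * k) + 1 + j)) ^ 2
        ≤ 36 * R^2 * ((k:ℝ)+1)^2 * ((2:ℝ)^(2*k))⁻¹ := by
      intro N
      have hre : ∑ j ∈ Finset.range N, (a (2 ^ (2 * k) + 1 + j)) ^ 2
          = ∑ i ∈ Finset.Ioc (2^(2*k)) (2^(2*k) + N), (a i)^2 := by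
        rw [← Finset.Icc_add_one_left_eq_Ioc, ← Finset.Ico_add_one_right_eq_Icc, Finset.sum_Ico_eq_sum_range]
        have hlen : 2^(2*k) + N + 1 - (2^(2*k) + 1) = N := by omega
        rw [hlen]
      rw [hre]
      have h2 : N + 1 ≤ 2^(2*N) :=
        le_trans (Nat.succ_le_of_lt (Nat.lt_two_pow_self (n := N)))
          (Nat.pow_le_pow_right (by norm_num) (by omega))
      have h3 : (1:ℕ) ≤ 2^(2*k) := Nat.one_le_two_pow
      have h5 : N ≤ 2^(2*k)*N := Nat.le_mul_of_pos_left N (by positivity)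
      have hsub : Finset.Ioc (2^(2*k)) (2^(2*k) + N) ⊆ Finset.Ioc (2^(2*k)) (2^(2*(k+N))) := by
        apply Finset.Ioc_subset_Ioc_right
        calc 2^(2*k) + N ≤ 2^(2*k) * (N+1) := by rw [Nat.mul_add, Nat.mul_one]; omega
          _ ≤ 2^(2*k) * 2^(2*N) := Nat.mul_le_mul_left _ h2
          _ = 2^(2*(k+N)) := by rw [← pow_add]; congr 1; ring
      refine le_trans (Finset.sum_le_sum_of_subset_of_nonneg hsub ?_) (hC N)
      intro i _ _
      positivity
    have hsummable : Summable (fun j => (a (2 ^ (2 * k) + 1 + j)) ^ 2) :=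
      summable_of_sum_range_le (fun j => by positivity) hpartial
    refine le_trans (Summable.tsum_le_of_sum_range_le hsummable hpartial) ?_
    have hz : (2 : ℝ) ^ (-(2 * (k : ℤ))) = ((2:ℝ)^(2*k))⁻¹ := by
      rw [zpow_neg, show (2 * (k:ℤ)) = ((2*k : ℕ) : ℤ) by push_cast; ring, zpow_natCast]
    rw [hz]
    nlinarith [mul_pos (mul_pos (pow_pos hR 2) (by positivity : (0:ℝ) < ((k:ℝ)+1)^2))
      (inv_pos.mpr hk4)]
end
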